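/- arXiv:1212.2931 — 2 statements merged into one kernel-verified Lean document; each statement's English description precedes it below -/
import Mathlib

section
/- Let K be a self-adjoint operator on a Hilbert space and S a unitary operator. If S maps the domain of K into itself and KS - SK = 2πS on the domain of K, then for all real σ, S e^{-iσK} = e^{2πiσ} e^{-iσK} S. -/
local notation "⟪" x ", " y "⟫" => @inner ℂ _ _ x y



/-- Let `K` be a self-adjoint operator and `S` a unitary operator with
`S D(K) ⊆ D(K)` and `KS - SK = 2πS` on `D(K)`.  Then for all real `σ`,
`S e^{-iσK} = e^{2πiσ} e^{-iσK} S`. -/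
theorem stmt_2 {H : Type*} [NormedAddCommGroup H] [InnerProductSpace ℂ H] [CompleteSpace H]
    (K : H →ₗ.[ℂ] H) (hdense : Dense (K.domain : Set H)) (hself : K.adjoint = K)
    (S : H →L[ℂ] H) (hS : S ∈ unitary (H →L[ℂ] H))
    (hdom : ∀ x, x ∈ K.domain → S x ∈ K.domain)
    (hcomm : ∀ x (hx : x ∈ K.domain),
      K ⟨S x, hdom x hx⟩ - S (K ⟨x, hx⟩) = ((2 * Real.pi : ℝ) : ℂ) • S x)
    -- `U σ = e^{-iσK}`, the strongly continuous unitary group generated by `K`: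
    (U : ℝ → H →L[ℂ] H)
    (hU0 : U 0 = 1)
    (hUadd : ∀ σ τ : ℝ, U (σ + τ) = (U σ).comp (U τ))
    (hUunit : ∀ σ : ℝ, U σ ∈ unitary (H →L[ℂ] H))
    (hUcont : ∀ x : H, Continuous fun σ : ℝ => U σ x)
    (hUgen : ∀ x (hx : x ∈ K.domain),
      HasDerivAt (fun σ : ℝ => U σ x) (-Complex.I • K ⟨x, hx⟩) 0) :
    ∀ (σ : ℝ) (x : H),
      S (U σ x) = Complex.exp (2 * Real.pi * Complex.I * σ) • U σ (S x) := by
  -- group law consequences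
  have hgroup : ∀ (σ : ℝ) (w : H), U σ (U (-σ) w) = w := by
    intro σ w
    have := hUadd σ (-σ)
    simp only [add_neg_cancel, hU0] at this
    have := congrArg (fun (T : H →L[ℂ] H) => T w) this
    simpa using this.symm
  have hgroup' : ∀ (σ : ℝ) (w : H), U (-σ) (U σ w) = w := by
    intro σ w
    have := hUadd (-σ) σ
    simp only [neg_add_cancel, hU0] at this
    have := congrArg (fun (T : H →L[ℂ] H) => T w) this
    simpa using this.symm
  -- derivative at all times
  have hderiv : ∀ (z : H) (hz : z ∈ K.domain) (σ₀ : ℝ),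
      HasDerivAt (fun σ : ℝ => U σ z) (U σ₀ (-Complex.I • K ⟨z, hz⟩)) σ₀ := by
    intro z hz σ₀
    have h1 : HasDerivAt (fun h : ℝ => U σ₀ (U h z)) (U σ₀ (-Complex.I • K ⟨z, hz⟩)) 0 :=
      by simpa [Function.comp_def] using ((U σ₀).restrictScalars ℝ).hasFDerivAt.comp_hasDerivAt 0 (hUgen z hz)
    have h2 : HasDerivAt (fun σ : ℝ => σ - σ₀) 1 σ₀ := (hasDerivAt_id σ₀).sub_const σ₀
    have h3 := HasDerivAt.scomp_of_eq σ₀ h1 h2 (by ring)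
    have h4 : (fun σ : ℝ => U σ z) = ((fun h : ℝ => U σ₀ (U h z)) ∘ fun σ => σ - σ₀) := by
      funext σ
      have hσ : σ = σ₀ + (σ - σ₀) := by ring
      simp only [Function.comp]
      conv_lhs => rw [hσ, hUadd]
      rfl
    rw [h4]
    simpa using h3
  -- U(-σ) is the adjoint of U σ
  have hadj : ∀ (σ : ℝ) (a b : H), ⟪U σ a, b⟫ = ⟪a, U (-σ) b⟫ := by
    intro σ a b
    have := ContinuousLinearMap.inner_map_map_of_mem_unitary (hUunit (-σ)) (U σ a) b
    rw [hgroup' σ a] at this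
    exact this.symm
  obtain ⟨hdomeq, hfun⟩ := LinearPMap.ext_iff.mp hself
  -- symmetry of K
  have hsymm : ∀ (u v : K.domain), ⟪K u, (v : H)⟫ = ⟪(u : H), K v⟫ := by
    intro u v
    have hu' : (u : H) ∈ K.adjoint.domain := by rw [hdomeq]; exact u.2
    have h := LinearPMap.adjoint_isFormalAdjoint hdense ⟨(u : H), hu'⟩ v
    rwa [hfun (x := (u : H)) (hf := hu') (hg := u.2)] at h
  -- U σ preserves the domain of K and commutes with K
  have hcommU : ∀ (z : H) (hz : z ∈ K.domain) (σ : ℝ),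
      ∃ h : U σ z ∈ K.domain, K ⟨U σ z, h⟩ = U σ (K ⟨z, hz⟩) := by
    intro z hz σ
    have claim : ∀ v : K.domain, ⟪U σ (K ⟨z, hz⟩), (v : H)⟫ = ⟪U σ z, K v⟫ := by
      intro v
      have d1 : HasDerivAt (fun t : ℝ => ⟪U t z, (v : H)⟫)
          (⟪U σ z, (0 : H)⟫ + ⟪U σ (-Complex.I • K ⟨z, hz⟩), (v : H)⟫) σ :=
        HasDerivAt.inner ℂ (hderiv z hz σ) (hasDerivAt_const σ (v : H))
      have heq : (fun t : ℝ => ⟪U t z, (v : H)⟫) = fun t : ℝ => ⟪z, U (-t) (v : H)⟫ :=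
        funext fun t => hadj t z v
      have dneg : HasDerivAt (fun t : ℝ => U (-t) (v : H))
          (-(U (-σ) (-Complex.I • K v))) σ := by
        have h := hderiv (v : H) v.2 (-σ)
        have h2 := HasDerivAt.scomp_of_eq σ h (hasDerivAt_neg σ) rfl
        simpa [Function.comp_def] using h2
      have d2 : HasDerivAt (fun t : ℝ => ⟪z, U (-t) (v : H)⟫)
          (⟪z, -(U (-σ) (-Complex.I • K v))⟫ + ⟪(0 : H), U (-σ) (v : H)⟫) σ :=
        HasDerivAt.inner ℂ (hasDerivAt_const σ z) dneg
      rw [heq] at d1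
      have duniq := d1.unique d2
      have duniq' : Complex.I * ⟪U σ (K ⟨z, hz⟩), (v : H)⟫ = Complex.I * ⟪U σ z, K v⟫ := by
        rw [hadj σ z (K v)]
        simpa [inner_smul_left, inner_smul_right, Complex.conj_I, neg_smul,
          map_smul] using duniq
      exact mul_left_cancel₀ Complex.I_ne_zero duniq'
    have hmem' : U σ z ∈ K.adjoint.domain :=
      LinearPMap.mem_adjoint_domain_of_exists _ ⟨U σ (K ⟨z, hz⟩), claim⟩
    have happ : K.adjoint ⟨U σ z, hmem'⟩ = U σ (K ⟨z, hz⟩) :=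
      LinearPMap.adjoint_apply_eq hdense _ claim
    have hmem : U σ z ∈ K.domain := by rw [← hdomeq]; exact hmem'
    exact ⟨hmem, by
      rw [← hfun (x := U σ z) (hf := hmem') (hg := hmem)]; exact happ⟩
  set c : ℂ := 2 * Real.pi * Complex.I with hc
  -- the key identity, weakly against domain vectors
  have key : ∀ (σ₁ : ℝ) (x : H), x ∈ K.domain → ∀ (y : H), y ∈ K.domain →
      ⟪U σ₁ y, S (U σ₁ x)⟫ = Complex.exp (c * σ₁) * ⟪y, S x⟫ := by
    intro σ₁ x hx y hy
    set f : ℝ → ℂ := fun σ => ⟪U σ y, S (U σ x)⟫ with hf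
    have hf' : ∀ σ : ℝ, HasDerivAt f (c * f σ) σ := by
      intro σ
      obtain ⟨hmx, hKx⟩ := hcommU x hx σ
      obtain ⟨hmy, hKy⟩ := hcommU y hy σ
      have dx : HasDerivAt (fun t : ℝ => S (U t x)) (S (U σ (-Complex.I • K ⟨x, hx⟩))) σ := by
        simpa [Function.comp_def] using (S.restrictScalars ℝ).hasFDerivAt.comp_hasDerivAt σ (hderiv x hx σ)
      have dfd := HasDerivAt.inner ℂ (hderiv y hy σ) dx
      have hrw : ⟪U σ y, S (U σ (-Complex.I • K ⟨x, hx⟩))⟫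
          + ⟪U σ (-Complex.I • K ⟨y, hy⟩), S (U σ x)⟫ = c * f σ := by
        simp only [map_smul]
        rw [← hKx, ← hKy, inner_smul_right, inner_smul_left]
        have hs := hsymm ⟨U σ y, hmy⟩ ⟨S (U σ x), hdom _ hmx⟩
        have hc2 := hcomm (U σ x) hmx
        rw [sub_eq_iff_eq_add] at hc2
        rw [hc2] at hs
        rw [hs, inner_add_right, inner_smul_right]
        simp only [Complex.conj_I, map_neg, hf, hc, neg_neg]
        push_cast
        ring
      rw [← hrw]
      exact dfd
    -- solve the ODE f' = c f
    set g : ℝ → ℂ := fun σ => Complex.exp (-c * σ) * f σ with hg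
    have hg' : ∀ σ : ℝ, HasDerivAt g 0 σ := by
      intro σ
      have hid : HasDerivAt (fun σ : ℝ => (σ : ℂ)) 1 σ := by
        simpa using (hasDerivAt_id σ).ofReal_comp
      have he : HasDerivAt (fun σ : ℝ => Complex.exp (-c * σ))
          (Complex.exp (-c * σ) * (-c * 1)) σ := (hid.const_mul (-c)).cexp
      have hmul := he.mul (hf' σ)
      convert hmul using 1
      · rfl
      · rfl
      · ring
    have hgc : g σ₁ = g 0 :=
      is_const_of_deriv_eq_zero (fun t => (hg' t).differentiableAt)
        (fun t => (hg' t).deriv) σ₁ 0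
    have hf0 : f 0 = ⟪y, S x⟫ := by simp [hf, hU0]
    have h1 : Complex.exp (-c * σ₁) * f σ₁ = f 0 := by simpa [hg] using hgc
    have h2 : Complex.exp (c * σ₁) * (Complex.exp (-c * σ₁) * f σ₁)
        = Complex.exp (c * σ₁) * f 0 := by rw [h1]
    rw [← mul_assoc, ← Complex.exp_add] at h2
    have h3 : c * σ₁ + -c * σ₁ = 0 := by ring
    rw [h3, Complex.exp_zero, one_mul] at h2
    rw [hf0] at h2
    exact h2
  -- conclude, first on the domain then by density
  intro σ x
  have hdom_case : ∀ z ∈ K.domain, S (U σ z) = Complex.exp (c * σ) • U σ (S z) := by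
    intro z hz
    have h1 : U (-σ) (S (U σ z)) = Complex.exp (c * σ) • S z := by
      apply hdense.eq_of_inner_right (𝕜 := ℂ)
      intro v hv
      calc ⟪(v : H), U (-σ) (S (U σ z))⟫ = ⟪U σ (v : H), S (U σ z)⟫ := (hadj σ v _).symm
        _ = Complex.exp (c * σ) * ⟪(v : H), S z⟫ := key σ z hz (v : H) hv
        _ = ⟪(v : H), Complex.exp (c * σ) • S z⟫ := (inner_smul_right _ _ _).symm
    have h2 := congrArg (U σ) h1
    rw [hgroup σ (S (U σ z)), map_smul] at h2
    exact h2
  have hcont1 : Continuous fun w => S (U σ w) := S.continuous.comp (U σ).continuous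
  have hcont2 : Continuous fun w => Complex.exp (c * σ) • U σ (S w) :=
    ((U σ).continuous.comp S.continuous).const_smul _
  have hext := Continuous.ext_on hdense hcont1 hcont2 fun z hz => hdom_case z hz
  exact congrFun hext x
end

section
/- Let K be self-adjoint and S unitary on a Hilbert space. Then the identity S e^{-iσK} = e^{2πiσ} e^{-iσK} S for all real σ holds if and only if the resolvent R(ζ) = (K - ζ)⁻¹ satisfies S R(ζ) = R(ζ + 2π) S for all non-real ζ. -/
open Complex Asymptotics

local notation "⟪" x ", " y "⟫" => @inner ℂ _ _ x y

/-- If the derivative of `σ ↦ U σ y` exists at `0`, then `y` is in the domain of the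
self-adjoint generator `K` and the derivative is `-I • K y`. -/
private theorem stmt3_gen {H : Type*} [NormedAddCommGroup H] [InnerProductSpace ℂ H]
    [CompleteSpace H]
    (K : H →ₗ.[ℂ] H) (hdense : Dense (K.domain : Set H)) (hself : K.adjoint = K)
    (U : ℝ → H →L[ℂ] H)
    (hU0 : U 0 = 1)
    (hUadd : ∀ σ τ : ℝ, U (σ + τ) = (U σ).comp (U τ))
    (hUunit : ∀ σ : ℝ, U σ ∈ unitary (H →L[ℂ] H))
    (hUgen : ∀ x (hx : x ∈ K.domain),
      HasDerivAt (fun σ : ℝ => U σ x) (-Complex.I • K ⟨x, hx⟩) 0)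
    (y v : H) (hd : HasDerivAt (fun σ : ℝ => U σ y) v 0) :
    ∃ h : y ∈ K.domain, K ⟨y, h⟩ = Complex.I • v := by
  have hUinv : ∀ σ : ℝ, U σ * U (-σ) = 1 := by
    intro σ
    rw [ContinuousLinearMap.mul_def, ← hUadd, add_neg_cancel, hU0]
  have hUstar : ∀ σ : ℝ, star (U σ) = U (-σ) := by
    intro σ
    have h1 : star (U σ) * U σ = 1 := (Unitary.mem_iff.mp (hUunit σ)).1
    calc star (U σ) = star (U σ) * (U σ * U (-σ)) := by rw [hUinv, mul_one]
      _ = (star (U σ) * U σ) * U (-σ) := by rw [mul_assoc]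
      _ = U (-σ) := by rw [h1, one_mul]
  have hUadj : ∀ (σ : ℝ) (u w : H), ⟪U (-σ) u, w⟫ = ⟪u, U σ w⟫ := by
    intro σ u w
    rw [← hUstar, ContinuousLinearMap.star_eq_adjoint]
    exact ContinuousLinearMap.adjoint_inner_left (U σ) w u
  have key : ∀ u : K.domain, ⟪Complex.I • v, (u : H)⟫ = ⟪y, K u⟫ := by
    intro u
    have hdu : HasDerivAt (fun σ : ℝ => U σ (u : H)) (-Complex.I • K u) 0 := by
      have := hUgen (u : H) u.2
      simpa using this
    have hdneg : HasDerivAt (fun σ : ℝ => U (-σ) (u : H)) (Complex.I • K u) 0 := by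
      have hneg : HasDerivAt (fun σ : ℝ => -σ) (-1 : ℝ) 0 := (hasDerivAt_id (0:ℝ)).neg
      have := hdu.scomp_of_eq 0 hneg (by norm_num)
      simpa [Function.comp_def] using this
    have h1 : HasDerivAt (fun σ : ℝ => ⟪(u : H), U σ y⟫) ⟪(u : H), v⟫ 0 :=
      ((innerSL ℂ (u : H)).restrictScalars ℝ).hasFDerivAt.comp_hasDerivAt 0 hd
    have h2 : HasDerivAt (fun σ : ℝ => ⟪y, U (-σ) (u : H)⟫) ⟪y, Complex.I • K u⟫ 0 :=
      ((innerSL ℂ y).restrictScalars ℝ).hasFDerivAt.comp_hasDerivAt 0 hdneg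
    have h3 : HasDerivAt (fun σ : ℝ => (starRingEnd ℂ) ⟪y, U (-σ) (u : H)⟫)
        ((starRingEnd ℂ) ⟪y, Complex.I • K u⟫) 0 := h2.star
    have hfun : (fun σ : ℝ => ⟪(u : H), U σ y⟫)
        = fun σ : ℝ => (starRingEnd ℂ) ⟪y, U (-σ) (u : H)⟫ := by
      funext σ
      rw [inner_conj_symm, hUadj]
    have heq : ⟪(u : H), v⟫ = (starRingEnd ℂ) ⟪y, Complex.I • K u⟫ := by
      refine HasDerivAt.unique h1 ?_
      rw [hfun]; exact h3
    have heq2 : ⟪v, (u : H)⟫ = ⟪y, Complex.I • K u⟫ := by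
      rw [← inner_conj_symm (𝕜 := ℂ) v (u : H), heq, Complex.conj_conj]
    rw [inner_smul_right] at heq2
    rw [inner_smul_left, heq2, Complex.conj_I]
    rw [← mul_assoc, neg_mul, Complex.I_mul_I, neg_neg, one_mul]
  rw [← hself]
  have hmem : y ∈ K.adjoint.domain :=
    LinearPMap.mem_adjoint_domain_of_exists y ⟨Complex.I • v, key⟩
  exact ⟨hmem, K.adjoint_apply_eq hdense ⟨y, hmem⟩ key⟩

/-- `U τ` preserves the domain of `K` and commutes with `K`. -/
private theorem stmt3_comm {H : Type*} [NormedAddCommGroup H] [InnerProductSpace ℂ H]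
    [CompleteSpace H]
    (K : H →ₗ.[ℂ] H) (hdense : Dense (K.domain : Set H)) (hself : K.adjoint = K)
    (U : ℝ → H →L[ℂ] H)
    (hU0 : U 0 = 1)
    (hUadd : ∀ σ τ : ℝ, U (σ + τ) = (U σ).comp (U τ))
    (hUunit : ∀ σ : ℝ, U σ ∈ unitary (H →L[ℂ] H))
    (hUgen : ∀ x (hx : x ∈ K.domain),
      HasDerivAt (fun σ : ℝ => U σ x) (-Complex.I • K ⟨x, hx⟩) 0)
    (τ : ℝ) (x : H) (hx : x ∈ K.domain) :
    ∃ h : U τ x ∈ K.domain, K ⟨U τ x, h⟩ = U τ (K ⟨x, hx⟩) := by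
  have hfun : (fun σ : ℝ => U σ (U τ x)) = fun σ : ℝ => U τ (U σ x) := by
    funext σ
    calc U σ (U τ x) = ((U σ).comp (U τ)) x := rfl
      _ = U (σ + τ) x := by rw [hUadd]
      _ = U (τ + σ) x := by rw [add_comm]
      _ = U τ (U σ x) := by rw [hUadd]; rfl
  have hd : HasDerivAt (fun σ : ℝ => U σ (U τ x)) (U τ (-Complex.I • K ⟨x, hx⟩)) 0 := by
    rw [hfun]
    exact ((U τ).restrictScalars ℝ).hasFDerivAt.comp_hasDerivAt 0 (hUgen x hx)
  obtain ⟨h, hK⟩ := stmt3_gen K hdense hself U hU0 hUadd hUunit hUgen _ _ hd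
  refine ⟨h, ?_⟩
  rw [hK, map_smul, smul_smul, mul_neg, Complex.I_mul_I, neg_neg, one_smul]

/-- Derivative at `0` of `ε ↦ U(-ε) S U(ε) z` for `z` in the domain, given the
intertwining relation `K (S z) = S (K z) + a • S z`. -/
private theorem stmt3_deriv0 {H : Type*} [NormedAddCommGroup H] [InnerProductSpace ℂ H]
    [CompleteSpace H]
    (K : H →ₗ.[ℂ] H)
    (U : ℝ → H →L[ℂ] H)
    (hU0 : U 0 = 1)
    (hUunit : ∀ σ : ℝ, U σ ∈ unitary (H →L[ℂ] H))
    (hUcont : ∀ x : H, Continuous fun σ : ℝ => U σ x)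
    (hUgen : ∀ x (hx : x ∈ K.domain),
      HasDerivAt (fun σ : ℝ => U σ x) (-Complex.I • K ⟨x, hx⟩) 0)
    (S : H →L[ℂ] H) (a : ℂ) (z : H) (hz : z ∈ K.domain) (hSz : S z ∈ K.domain)
    (hKSz : K ⟨S z, hSz⟩ = S (K ⟨z, hz⟩) + a • S z) :
    HasDerivAt (fun ε : ℝ => U (-ε) (S (U ε z))) ((a * Complex.I) • S z) 0 := by
  have hUnorm : ∀ (σ : ℝ) (w : H), ‖U σ w‖ = ‖w‖ := fun σ w =>
    (U σ).norm_map_of_mem_unitary (hUunit σ) w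
  set w := K ⟨z, hz⟩ with hw
  set h' : H := S (-Complex.I • w) with hh'
  set KS : H := Complex.I • K ⟨S z, hSz⟩ with hKS
  have hh : HasDerivAt (fun ε : ℝ => S (U ε z)) h' 0 :=
    (S.restrictScalars ℝ).hasFDerivAt.comp_hasDerivAt 0 (hUgen z hz)
  have hC : HasDerivAt (fun ε : ℝ => U (-ε) (S z)) KS 0 := by
    have hneg : HasDerivAt (fun σ : ℝ => -σ) (-1 : ℝ) 0 := (hasDerivAt_id (0:ℝ)).neg
    have := (hUgen (S z) hSz).scomp_of_eq 0 hneg (by norm_num)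
    simpa [Function.comp_def] using this
  have hG : HasDerivAt (fun ε : ℝ => U (-ε) (S (U ε z))) (h' + KS) 0 := by
    rw [hasDerivAt_iff_isLittleO_nhds_zero]
    have oA : (fun ε : ℝ => U (-ε) (S (U ε z) - S (U 0 z) - ε • h')) =o[nhds 0]
        (fun ε : ℝ => ε) := by
      rw [← isLittleO_norm_left]
      have h1 := hasDerivAt_iff_isLittleO_nhds_zero.mp hh
      rw [← isLittleO_norm_left] at h1
      have h2 : (fun ε : ℝ => ‖U (-ε) (S (U ε z) - S (U 0 z) - ε • h')‖)
          = fun ε : ℝ => ‖S (U (0 + ε) z) - S (U 0 z) - ε • h'‖ := by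
        funext ε
        rw [hUnorm, zero_add]
      rw [h2]
      exact h1
    have oB : (fun ε : ℝ => ε • (U (-ε) h' - h')) =o[nhds 0] (fun ε : ℝ => ε) := by
      have ht : Filter.Tendsto (fun ε : ℝ => U (-ε) h' - h') (nhds 0) (nhds 0) := by
        have hc : Continuous fun ε : ℝ => U (-ε) h' - h' :=
          ((hUcont h').comp continuous_neg).sub continuous_const
        simpa [hU0] using hc.tendsto 0
      have := (isBigO_refl (fun ε : ℝ => ε) (nhds 0)).smul_isLittleO
        ((isLittleO_one_iff ℝ).mpr ht)
      simpa using this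
    have oC : (fun ε : ℝ => U (-ε) (S z) - S z - ε • KS) =o[nhds 0] (fun ε : ℝ => ε) := by
      have h1 := hasDerivAt_iff_isLittleO_nhds_zero.mp hC
      simpa [hU0] using h1
    have hsum := (oA.add oB).add oC
    refine hsum.congr' (Filter.Eventually.of_forall fun ε => ?_) (by rfl)
    simp only [zero_add, neg_zero, hU0, ContinuousLinearMap.one_apply, map_sub,
      ContinuousLinearMap.map_smul_of_tower, smul_sub, smul_add]
    abel
  have hD : h' + KS = (a * Complex.I) • S z := by
    rw [hh', hKS, hKSz, map_smul, smul_add, smul_smul, neg_smul, mul_comm Complex.I a]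
    abel
  rw [← hD]
  exact hG

/-- The group intertwining relation for domain elements, given the infinitesimal one. -/
private theorem stmt3_group {H : Type*} [NormedAddCommGroup H] [InnerProductSpace ℂ H]
    [CompleteSpace H]
    (K : H →ₗ.[ℂ] H) (hdense : Dense (K.domain : Set H)) (hself : K.adjoint = K)
    (U : ℝ → H →L[ℂ] H)
    (hU0 : U 0 = 1)
    (hUadd : ∀ σ τ : ℝ, U (σ + τ) = (U σ).comp (U τ))
    (hUunit : ∀ σ : ℝ, U σ ∈ unitary (H →L[ℂ] H))
    (hUcont : ∀ x : H, Continuous fun σ : ℝ => U σ x)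
    (hUgen : ∀ x (hx : x ∈ K.domain),
      HasDerivAt (fun σ : ℝ => U σ x) (-Complex.I • K ⟨x, hx⟩) 0)
    (S : H →L[ℂ] H) (a : ℂ)
    (hint : ∀ z (hz : z ∈ K.domain), ∃ h : S z ∈ K.domain,
      K ⟨S z, h⟩ = S (K ⟨z, hz⟩) + a • S z)
    (x : H) (hx : x ∈ K.domain) (σ : ℝ) :
    S (U σ x) = Complex.exp (a * Complex.I * σ) • U σ (S x) := by
  set g : ℝ → H := fun τ => U (-τ) (S (U τ x)) with hgdef
  have hg : ∀ σ : ℝ, HasDerivAt g ((a * Complex.I) • g σ) σ := by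
    intro σ
    obtain ⟨hzdom, _⟩ := stmt3_comm K hdense hself U hU0 hUadd hUunit hUgen σ x hx
    obtain ⟨hSz, hKSz⟩ := hint (U σ x) hzdom
    have h0 : HasDerivAt (fun ε : ℝ => U (-ε) (S (U ε (U σ x))))
        ((a * Complex.I) • S (U σ x)) 0 :=
      stmt3_deriv0 K U hU0 hUunit hUcont hUgen S a (U σ x) hzdom hSz hKSz
    have hsub : HasDerivAt (fun τ : ℝ => τ - σ) 1 σ := (hasDerivAt_id σ).sub_const σ
    have h1 := h0.scomp_of_eq σ hsub (by rw [sub_self])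
    have h2 := ((U (-σ)).restrictScalars ℝ).hasFDerivAt.comp_hasDerivAt σ h1
    have h3 : HasDerivAt g
        (U (-σ) ((1:ℝ) • (a * Complex.I) • S (U σ x))) σ := by
      refine h2.congr_of_eventuallyEq (Filter.Eventually.of_forall fun τ => ?_)
      show U (-τ) (S (U τ x)) = U (-σ) (U (-(τ - σ)) (S (U (τ - σ) (U σ x))))
      have e1 : U (τ - σ) (U σ x) = U τ x := by
        rw [show U τ = U ((τ - σ) + σ) by rw [sub_add_cancel], hUadd]; rfl
      have e2 : U (-σ) (U (-(τ - σ)) (S (U τ x))) = U (-τ) (S (U τ x)) := by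
        rw [show U (-τ) = U (-σ + -(τ - σ)) by rw [show -σ + -(τ - σ) = -τ by ring], hUadd]
        rfl
      rw [e1, e2]
    have h4 : U (-σ) ((1:ℝ) • (a * Complex.I) • S (U σ x)) = (a * Complex.I) • g σ := by
      rw [one_smul, map_smul]
    rw [h4] at h3
    exact h3
  -- the auxiliary function `φ` is constant
  have hφ : ∀ τ : ℝ, HasDerivAt
      (fun τ : ℝ => Complex.exp (-(a * Complex.I) * τ) • g τ) 0 τ := by
    intro τ
    have hlin : HasDerivAt (fun τ : ℝ => -(a * Complex.I) * (τ : ℂ)) (-(a * Complex.I)) τ := by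
      simpa using (Complex.ofRealCLM.hasDerivAt (x := τ)).const_mul (-(a * Complex.I))
    have he := hlin.cexp
    have := he.smul (hg τ)
    have hcoef : Complex.exp (-(a * Complex.I) * τ) • (a * Complex.I) • g τ +
        (Complex.exp (-(a * Complex.I) * τ) * -(a * Complex.I)) • g τ = 0 := by
      rw [smul_smul, ← add_smul,
        show Complex.exp (-(a * Complex.I) * τ) * (a * Complex.I) +
          Complex.exp (-(a * Complex.I) * τ) * -(a * Complex.I) = 0 by ring, zero_smul]
    rw [hcoef] at this
    exact this
  have hconst : ∀ τ : ℝ, Complex.exp (-(a * Complex.I) * τ) • g τ = g 0 := by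
    intro τ
    have hdiff : Differentiable ℝ (fun τ : ℝ => Complex.exp (-(a * Complex.I) * τ) • g τ) :=
      fun τ => (hφ τ).differentiableAt
    have := is_const_of_deriv_eq_zero hdiff (fun τ => (hφ τ).deriv) τ 0
    simpa using this
  have hg0 : g 0 = S x := by
    simp [hgdef, hU0]
  have hgs : g σ = Complex.exp (a * Complex.I * σ) • S x := by
    have h5 := hconst σ
    rw [hg0] at h5
    calc g σ = Complex.exp (a * Complex.I * σ) •
          (Complex.exp (-(a * Complex.I) * σ) • g σ) := by
          rw [smul_smul, ← Complex.exp_add,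
            show a * Complex.I * σ + -(a * Complex.I) * σ = 0 by ring,
            Complex.exp_zero, one_smul]
      _ = Complex.exp (a * Complex.I * σ) • S x := by rw [h5]
  have hfin : U σ (g σ) = S (U σ x) := by
    show U σ (U (-σ) (S (U σ x))) = _
    rw [show U σ (U (-σ) (S (U σ x))) = ((U σ).comp (U (-σ))) (S (U σ x)) from rfl,
      ← hUadd, add_neg_cancel, hU0]
    rfl
  rw [← hfin, hgs, map_smul]


/-- Let `K` be self-adjoint and `S` unitary.  Then
`S e^{-iσK} = e^{2πiσ} e^{-iσK} S` for all real `σ` holds if and only if the resolvent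
`R(ζ) = (K - ζ)⁻¹` satisfies `S R(ζ) = R(ζ + 2π) S` for all non-real `ζ`. -/
theorem stmt_3 {H : Type*} [NormedAddCommGroup H] [InnerProductSpace ℂ H] [CompleteSpace H]
    (K : H →ₗ.[ℂ] H) (hdense : Dense (K.domain : Set H)) (hself : K.adjoint = K)
    (S : H →L[ℂ] H) (hS : S ∈ unitary (H →L[ℂ] H))
    -- `U σ = e^{-iσK}`, the strongly continuous unitary group generated by `K`:
    (U : ℝ → H →L[ℂ] H)
    (hU0 : U 0 = 1)
    (hUadd : ∀ σ τ : ℝ, U (σ + τ) = (U σ).comp (U τ))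
    (hUunit : ∀ σ : ℝ, U σ ∈ unitary (H →L[ℂ] H))
    (hUcont : ∀ x : H, Continuous fun σ : ℝ => U σ x)
    (hUgen : ∀ x (hx : x ∈ K.domain),
      HasDerivAt (fun σ : ℝ => U σ x) (-Complex.I • K ⟨x, hx⟩) 0)
    -- `R ζ = (K - ζ)⁻¹` for `Im ζ ≠ 0`:
    (R : ℂ → H →L[ℂ] H)
    (hR : ∀ ζ : ℂ, ζ.im ≠ 0 → ∀ x : H, ∃ h : R ζ x ∈ K.domain,
      K ⟨R ζ x, h⟩ - ζ • R ζ x = x)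
    (hR' : ∀ ζ : ℂ, ζ.im ≠ 0 → ∀ x (hx : x ∈ K.domain),
      R ζ (K ⟨x, hx⟩ - ζ • x) = x) :
    (∀ (σ : ℝ) (x : H),
        S (U σ x) = Complex.exp (2 * Real.pi * Complex.I * σ) • U σ (S x)) ↔
    (∀ ζ : ℂ, ζ.im ≠ 0 → ∀ x : H,
        S (R ζ x) = R (ζ + (2 * Real.pi : ℝ)) (S x)) := by
  constructor
  · -- group relation ⇒ resolvent relation
    intro hgrp ζ hζ x
    have hint : ∀ z (hz : z ∈ K.domain), ∃ h : S z ∈ K.domain,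
        K ⟨S z, h⟩ = S (K ⟨z, hz⟩) + ((2 * Real.pi : ℝ) : ℂ) • S z := by
      intro z hz
      have hrel : (fun σ : ℝ => U σ (S z))
          = fun σ : ℝ => Complex.exp (-(2 * Real.pi * Complex.I) * σ) • S (U σ z) := by
        funext σ
        rw [hgrp σ z, smul_smul, ← Complex.exp_add,
          show -(2 * Real.pi * Complex.I) * σ + 2 * Real.pi * Complex.I * σ = 0 by ring,
          Complex.exp_zero, one_smul]
      have he : HasDerivAt (fun σ : ℝ => Complex.exp (-(2 * Real.pi * Complex.I) * σ))
          (-(2 * Real.pi * Complex.I)) 0 := by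
        have hlin : HasDerivAt (fun σ : ℝ => -(2 * Real.pi * Complex.I) * (σ : ℂ))
            (-(2 * Real.pi * Complex.I)) 0 := by
          simpa using (Complex.ofRealCLM.hasDerivAt (x := (0:ℝ))).const_mul
            (-(2 * (Real.pi : ℂ) * Complex.I))
        simpa using hlin.cexp
      have hh : HasDerivAt (fun σ : ℝ => S (U σ z)) (S (-Complex.I • K ⟨z, hz⟩)) 0 :=
        (S.restrictScalars ℝ).hasFDerivAt.comp_hasDerivAt 0 (hUgen z hz)
      have hd0 := he.smul hh
      have hd : HasDerivAt (fun σ : ℝ => U σ (S z))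
          (S (-Complex.I • K ⟨z, hz⟩) + (-(2 * Real.pi * Complex.I)) • S z) 0 := by
        rw [hrel]
        convert hd0 using 1
        · rfl
        simp [hU0]
      obtain ⟨hm, hK⟩ := stmt3_gen K hdense hself U hU0 hUadd hUunit hUgen _ _ hd
      refine ⟨hm, ?_⟩
      rw [hK, smul_add, map_smul, smul_smul, smul_smul,
        show Complex.I * -Complex.I = 1 by rw [mul_neg, Complex.I_mul_I, neg_neg],
        show Complex.I * -(2 * (Real.pi : ℂ) * Complex.I) = ((2 * Real.pi : ℝ) : ℂ) by
          push_cast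
          linear_combination (-(2 * (Real.pi : ℂ))) * Complex.I_mul_I,
        one_smul]
    obtain ⟨hm, hv⟩ := hR ζ hζ x
    obtain ⟨hSy, hKSy⟩ := hint (R ζ x) hm
    have him : (ζ + ((2 * Real.pi : ℝ) : ℂ)).im ≠ 0 := by simpa using hζ
    have hx2 : S x = S (K ⟨R ζ x, hm⟩) - ζ • S (R ζ x) := by
      rw [← map_smul, ← map_sub, hv]
    have hval : K ⟨S (R ζ x), hSy⟩ - (ζ + ((2 * Real.pi : ℝ) : ℂ)) • S (R ζ x) = S x := by
      rw [hKSy, hx2]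
      module
    have hfin := hR' (ζ + ((2 * Real.pi : ℝ) : ℂ)) him (S (R ζ x)) hSy
    rw [hval] at hfin
    exact hfin.symm
  · -- resolvent relation ⇒ group relation
    intro hres σ x
    have hI : (Complex.I).im ≠ 0 := by simp
    have hint : ∀ z (hz : z ∈ K.domain), ∃ h : S z ∈ K.domain,
        K ⟨S z, h⟩ = S (K ⟨z, hz⟩) + ((2 * Real.pi : ℝ) : ℂ) • S z := by
      intro z hz
      have him : (Complex.I + ((2 * Real.pi : ℝ) : ℂ)).im ≠ 0 := by simp
      obtain ⟨hm, hv⟩ := hR (Complex.I + ((2 * Real.pi : ℝ) : ℂ)) him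
        (S (K ⟨z, hz⟩ - Complex.I • z))
      have e2 : R (Complex.I + ((2 * Real.pi : ℝ) : ℂ)) (S (K ⟨z, hz⟩ - Complex.I • z))
          = S z := by
        rw [← hres Complex.I hI (K ⟨z, hz⟩ - Complex.I • z), hR' Complex.I hI z hz]
      have congrK : ∀ (a b : H) (ha : a ∈ K.domain) (_ : a = b), ∃ hb : b ∈ K.domain,
          K ⟨b, hb⟩ = K ⟨a, ha⟩ := by
        rintro a b ha rfl; exact ⟨ha, rfl⟩
      obtain ⟨hb, hKb⟩ := congrK _ _ hm e2
      rw [← hKb] at hv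
      rw [e2] at hv
      refine ⟨hb, ?_⟩
      have hw : S (K ⟨z, hz⟩ - Complex.I • z) = S (K ⟨z, hz⟩) - Complex.I • S z := by
        rw [map_sub, map_smul]
      rw [hw] at hv
      rw [sub_eq_iff_eq_add.mp hv]
      module
    have hgrp := stmt3_group K hdense hself U hU0 hUadd hUunit hUcont hUgen S
      ((2 * Real.pi : ℝ) : ℂ) hint
    have hc1 : Continuous fun y : H => S (U σ y) := S.continuous.comp (U σ).continuous
    have hc2 : Continuous fun y : H =>
        Complex.exp (2 * Real.pi * Complex.I * σ) • U σ (S y) :=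
      ((U σ).continuous.comp S.continuous).const_smul _
    have heq := Continuous.ext_on hdense hc1 hc2 (fun y hy => by
      rw [hgrp y hy σ]
      congr 2
      push_cast
      ring)
    exact congrFun heq x
end
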